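/- Let R be a commutative Noetherian ring. Let Y be a bounded above chain complex of R-modules all of whose components are Gorenstein cotorsion. Then Ext^1(F, Y) = 0 for every F-totally acyclic complex of flats F, where Ext^1 is computed in the abelian category Ch(R) of chain complexes of R-modules. -/

import Mathlib

/-!
STATEMENT 9: Let `R` be a commutative Noetherian ring and `Y` a bounded above chain complex
of `R`-modules all of whose components are Gorenstein cotorsion.  Then `Ext¹(F, Y) = 0` in
`Ch(R)` for every F-totally acyclic complex of flats `F`.

The vanishing of the (Yoneda) group `Ext¹(A, B)` is expressed by the (equivalent)
statement that every short exact sequence `0 → B → E → A → 0` splits.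
-/

universe u

open CategoryTheory MonoidalCategory Limits

/-- Vanishing of (Yoneda) `Ext¹(A, B)` in an abelian category: every short exact
sequence `0 → B → E → A → 0` splits. -/
def Ext1Vanishes {C : Type*} [Category C] [Abelian C] (A B : C) : Prop :=
  ∀ (E : C) (f : B ⟶ E) (g : E ⟶ A) (w : f ≫ g = 0),
    (ShortComplex.mk f g w).ShortExact → ∃ s : A ⟶ E, s ≫ g = 𝟙 A

variable {R : Type u} [CommRing R]

/-- An `R`-module `M` is cotorsion if `Ext¹_R(F, M) = 0` for every flat `R`-module `F`. -/
def IsCotorsionModule (M : ModuleCat.{u} R) : Prop :=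
  ∀ F : ModuleCat.{u} R, Module.Flat R F → Ext1Vanishes F M

/-- A chain complex `F` of `R`-modules is an F-totally acyclic complex of flats if all its
components are flat, it is acyclic, and `I ⊗[R] F` is acyclic for every injective
`R`-module `I`. -/
def FTotallyAcyclic (F : ChainComplex (ModuleCat.{u} R) ℤ) : Prop :=
  (∀ n, Module.Flat R (F.X n)) ∧ (∀ n, F.ExactAt n) ∧
    ∀ I : ModuleCat.{u} R, Module.Injective R I →
      ∀ n, (((tensorLeft I).mapHomologicalComplex (ComplexShape.down ℤ)).obj F).ExactAt n

/-- An `R`-module is Gorenstein flat if it is isomorphic to `Z₀ F` for some F-totally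
acyclic complex of flats `F`. -/
def IsGorensteinFlat (G : ModuleCat.{u} R) : Prop :=
  ∃ F : ChainComplex (ModuleCat.{u} R) ℤ, FTotallyAcyclic F ∧ Nonempty (G ≅ F.cycles 0)

/-- An `R`-module `L` is Gorenstein cotorsion if `Ext¹_R(G, L) = 0` for every Gorenstein
flat `R`-module `G`. -/
def IsGorensteinCotorsion (L : ModuleCat.{u} R) : Prop :=
  ∀ G : ModuleCat.{u} R, IsGorensteinFlat G → Ext1Vanishes G L

/-! ### Auxiliary material -/

namespace GCAux

open HomologicalComplex

/-- Elementwise exactness criterion for chain complexes of modules, with freely chosen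
representatives of the neighbouring indices. -/
lemma exactAt_iff_elem (K : ChainComplex (ModuleCat.{u} R) ℤ) (p n q : ℤ)
    (hp : n + 1 = p) (hq : q + 1 = n) :
    K.ExactAt n ↔ ∀ x : K.X n, K.d n q x = 0 → ∃ y : K.X p, K.d p n y = x := by
  rw [K.exactAt_iff' p n q (by rw [ChainComplex.prev]; omega)
    (by rw [ChainComplex.next]; omega)]
  exact ShortComplex.moduleCat_exact_iff _

/-- The cycles object in degree `n` is the kernel of the outgoing differential. -/
noncomputable def cyclesIsoKer (K : ChainComplex (ModuleCat.{u} R) ℤ) (n : ℤ) :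
    K.cycles n ≅ ModuleCat.of R (LinearMap.ker (K.d n (n-1)).hom) :=
  (K.cyclesIsoSc' (n+1) n (n-1) (by rw [ChainComplex.prev]) (by rw [ChainComplex.next])) ≪≫
    (K.sc' (n+1) n (n-1)).moduleCatCyclesIso

lemma isGorensteinFlat_of_iso {G G' : ModuleCat.{u} R} (e : G ≅ G')
    (h : IsGorensteinFlat G') : IsGorensteinFlat G := by
  obtain ⟨Fc, h1, ⟨e'⟩⟩ := h
  exact ⟨Fc, h1, ⟨e ≪≫ e'⟩⟩

/-- A complex whose differentials alternate between bijections and zero maps is exact. -/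
lemma period2_exact (K : ChainComplex (ModuleCat.{u} R) ℤ)
    (hbij : ∀ i j : ℤ, j + 1 = i → Even j → Function.Bijective (K.d i j))
    (hz : ∀ i j : ℤ, j + 1 = i → ¬ Even j → K.d i j = 0) (n : ℤ) : K.ExactAt n := by
  rw [exactAt_iff_elem K (n+1) n (n-1) rfl (by omega)]
  intro x hx
  by_cases h : Even (n-1)
  · have hb := hbij n (n-1) (by omega) h
    have hx0 : x = 0 := by
      apply hb.1
      rw [hx, map_zero]
    exact ⟨0, by rw [map_zero, hx0]⟩
  · have he : Even n := by
      rw [Int.even_iff] at h ⊢; omega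
    exact (hbij (n+1) n rfl he).2 x

open Classical in
/-- The "period two" contractible complex `⋯ → M → M → M → ⋯` with alternating identity
and zero differentials, having `M` as cycles in degree `0`. -/
noncomputable def disc (M : ModuleCat.{u} R) : ChainComplex (ModuleCat.{u} R) ℤ where
  X _ := M
  d i j := if j + 1 = i ∧ Even j then 𝟙 M else 0
  shape i j h := by
    rw [ComplexShape.down_Rel] at h
    rw [if_neg (fun hc : j + 1 = i ∧ Even j => h hc.1)]
  d_comp_d' i j k hij hjk := by
    rw [ComplexShape.down_Rel] at hij hjk
    by_cases h : Even k
    · have hj : ¬ Even j := by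
        rw [Int.even_iff] at h ⊢; omega
      rw [if_neg (fun hc : j + 1 = i ∧ Even j => hj hc.2), zero_comp]
    · rw [if_neg (fun hc : k + 1 = j ∧ Even k => h hc.2), comp_zero]

lemma disc_d_eq_id (M : ModuleCat.{u} R) {i j : ℤ} (hij : j + 1 = i) (hj : Even j) :
    (disc M).d i j = 𝟙 M :=
  if_pos ⟨hij, hj⟩

lemma disc_d_eq_zero (M : ModuleCat.{u} R) {i j : ℤ} (hj : ¬ Even j) :
    (disc M).d i j = 0 :=
  if_neg (fun hc => hj hc.2)

lemma disc_fta (M : ModuleCat.{u} R) (hM : Module.Flat R M) :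
    FTotallyAcyclic (disc M) := by
  refine ⟨fun n => hM, fun n => ?_, fun I _ n => ?_⟩
  · refine period2_exact _ (fun i j hij hj => ?_) (fun i j hij hj => disc_d_eq_zero M hj) n
    rw [disc_d_eq_id M hij hj]
    exact Function.bijective_id
  · refine period2_exact _ (fun i j hij hj => ?_) (fun i j hij hj => ?_) n
    · show Function.Bijective ((tensorLeft I).map ((disc M).d i j))
      rw [show (tensorLeft I).map ((disc M).d i j) = 𝟙 ((tensorLeft I).obj M) by
        rw [disc_d_eq_id M hij hj]; exact CategoryTheory.Functor.map_id _ _]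
      exact Function.bijective_id
    · show (tensorLeft I).map ((disc M).d i j) = 0
      rw [disc_d_eq_zero M hj, CategoryTheory.Functor.map_zero]

/-- Every flat module is Gorenstein flat. -/
lemma gf_of_flat (M : ModuleCat.{u} R) (hM : Module.Flat R M) : IsGorensteinFlat M := by
  refine ⟨disc M, disc_fta M hM, ⟨?_ ≪≫ (cyclesIsoKer (disc M) 0).symm⟩⟩
  have hd : (disc M).d 0 (0-1) = 0 :=
    disc_d_eq_zero M (by rw [Int.even_iff]; omega)
  exact
    { hom := ModuleCat.ofHom (LinearMap.codRestrict _ LinearMap.id (fun x => by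
        rw [LinearMap.mem_ker, hd]; rfl))
      inv := ModuleCat.ofHom (LinearMap.ker ((disc M).d 0 (0-1)).hom).subtype
      hom_inv_id := rfl
      inv_hom_id := by
        ext x
        rfl }

/-- Shift of a chain complex (reindexing by `t`). -/
@[simps]
def shiftc (K : ChainComplex (ModuleCat.{u} R) ℤ) (t : ℤ) :
    ChainComplex (ModuleCat.{u} R) ℤ where
  X n := K.X (n + t)
  d i j := K.d (i + t) (j + t)
  shape i j h := K.shape _ _ (by
    rw [ComplexShape.down_Rel] at h ⊢; omega)
  d_comp_d' i j k _ _ := K.d_comp_d _ _ _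

lemma shiftc_fta {K : ChainComplex (ModuleCat.{u} R) ℤ} (hK : FTotallyAcyclic K) (t : ℤ) :
    FTotallyAcyclic (shiftc K t) := by
  refine ⟨fun n => hK.1 (n + t), fun n => ?_, fun I hI n => ?_⟩
  · rw [exactAt_iff_elem (shiftc K t) (n+1) n (n-1) rfl (by omega)]
    exact (exactAt_iff_elem K ((n+1)+t) (n+t) ((n-1)+t) (by omega) (by omega)).mp
      (hK.2.1 (n+t))
  · rw [exactAt_iff_elem _ (n+1) n (n-1) rfl (by omega)]
    exact (exactAt_iff_elem (((tensorLeft I).mapHomologicalComplex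
        (ComplexShape.down ℤ)).obj K) ((n+1)+t) (n+t) ((n-1)+t) (by omega) (by omega)).mp
      (hK.2.2 I hI (n+t))

/-- Congruence isomorphism between kernels of differentials with equal indices. -/
noncomputable def kerCongr (K : ChainComplex (ModuleCat.{u} R) ℤ) {a a' b b' : ℤ}
    (ha : a = a') (hb : b = b') :
    ModuleCat.of R (LinearMap.ker (K.d a b).hom) ≅ ModuleCat.of R (LinearMap.ker (K.d a' b').hom) := by
  subst ha; subst hb; exact Iso.refl _

/-- The kernel of any differential of an F-totally acyclic complex is Gorenstein flat. -/
lemma gf_ker {K : ChainComplex (ModuleCat.{u} R) ℤ} (hK : FTotallyAcyclic K) (a b : ℤ)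
    (hab : b + 1 = a) :
    IsGorensteinFlat (ModuleCat.of R (LinearMap.ker (K.d a b).hom)) := by
  refine ⟨shiftc K a, shiftc_fta hK a, ⟨?_⟩⟩
  exact (kerCongr K (show a = 0 + a by omega) (show b = (0-1) + a by omega)) ≪≫
    (cyclesIsoKer (shiftc K a) 0).symm

/-- Extension of homomorphisms along a submodule inclusion, given vanishing of the
relevant `Ext¹`. -/
lemma extend_of_ext1 (L M : ModuleCat.{u} R) (Z : Submodule R M)
    (hvan : Ext1Vanishes (ModuleCat.of R (M ⧸ Z)) L) (v : Z →ₗ[R] L) :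
    ∃ w : M →ₗ[R] L, ∀ (z : M) (hz : z ∈ Z), w z = v ⟨z, hz⟩ := by
  classical
  set φ : Z →ₗ[R] L × M := LinearMap.prod v (-(Z.subtype)) with hφ
  set U : Submodule R (L × M) := LinearMap.range φ with hU
  let E : ModuleCat.{u} R := ModuleCat.of R ((L × M) ⧸ U)
  let fm : L →ₗ[R] (L × M) ⧸ U := U.mkQ ∘ₗ LinearMap.inl R L M
  let gm : (L × M) ⧸ U →ₗ[R] M ⧸ Z := Submodule.liftQ U (Z.mkQ ∘ₗ LinearMap.snd R L M)
    (by
      rintro x ⟨z, rfl⟩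
      simp [hφ, Submodule.Quotient.mk_eq_zero])
  have hfm : ∀ l : L, fm l = Submodule.Quotient.mk ((l, 0) : L × M) := fun _ => rfl
  have hgm : ∀ x : L × M, gm (Submodule.Quotient.mk x) = Submodule.Quotient.mk x.2 :=
    fun _ => rfl
  have hfg : ∀ l : L, gm (fm l) = 0 := by
    intro l
    rw [hfm, hgm]
    exact congrArg _ rfl
  let fc : L ⟶ E := ModuleCat.ofHom fm
  let gc : E ⟶ ModuleCat.of R (M ⧸ Z) := ModuleCat.ofHom gm
  have w0 : fc ≫ gc = 0 := by
    ext l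
    exact hfg l
  have hinj : Function.Injective fm := by
    have key : ∀ l : L, fm l = 0 → l = 0 := by
      intro l hl
      have hmem : ((l, 0) : L × M) ∈ U := by
        rw [hfm] at hl
        rwa [Submodule.Quotient.mk_eq_zero] at hl
      obtain ⟨z, hz⟩ := hmem
      have h2 : -(z : M) = 0 := congrArg Prod.snd hz
      have hz0 : z = 0 := by
        ext
        simpa [neg_eq_zero] using h2
      have h1 : v z = l := congrArg Prod.fst hz
      rw [← h1, hz0, map_zero]
    intro a b hab
    have := key (a - b) (by rw [map_sub, hab, sub_self])
    exact sub_eq_zero.mp this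
  have hsurj : Function.Surjective gm := by
    intro q
    obtain ⟨m, rfl⟩ := Submodule.Quotient.mk_surjective Z q
    exact ⟨Submodule.Quotient.mk (0, m), hgm _⟩
  have hker : ∀ x : (L × M) ⧸ U, gm x = 0 → ∃ l : L, fm l = x := by
    intro x hx
    obtain ⟨⟨l, m⟩, rfl⟩ := Submodule.Quotient.mk_surjective U x
    rw [hgm] at hx
    have hm : m ∈ Z := by rwa [← Submodule.Quotient.mk_eq_zero]
    refine ⟨l + v ⟨m, hm⟩, ?_⟩
    rw [hfm, Submodule.Quotient.eq]
    exact ⟨⟨m, hm⟩, by simp [hφ, Prod.ext_iff]⟩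
  have hSE : (ShortComplex.mk fc gc w0).ShortExact := by
    have hm : Mono (ShortComplex.mk fc gc w0).f :=
      (ModuleCat.mono_iff_injective _).mpr hinj
    have he : Epi (ShortComplex.mk fc gc w0).g :=
      (ModuleCat.epi_iff_surjective _).mpr hsurj
    exact ShortComplex.ShortExact.mk'
      ((ShortComplex.moduleCat_exact_iff _).mpr (fun x hx => hker x hx)) hm he
  obtain ⟨s, hs⟩ := hvan E fc gc w0 hSE
  let sm : (M ⧸ Z) →ₗ[R] (L × M) ⧸ U := s.hom
  have hgs : ∀ q : M ⧸ Z, gm (sm q) = q := fun q => LinearMap.congr_fun (congrArg ModuleCat.Hom.hom hs) q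
  let p : ((L × M) ⧸ U) →ₗ[R] ((L × M) ⧸ U) := LinearMap.id - (sm ∘ₗ gm)
  have hp : ∀ x, p x = x - sm (gm x) := fun _ => rfl
  have hmem : ∀ x, p x ∈ LinearMap.range fm := by
    intro x
    have h0 : gm (p x) = 0 := by
      rw [hp, map_sub, hgs, sub_self]
    exact hker (p x) h0
  let r : ((L × M) ⧸ U) →ₗ[R] L :=
    ((LinearEquiv.ofInjective fm hinj).symm : LinearMap.range fm →ₗ[R] L) ∘ₗ
      LinearMap.codRestrict _ p hmem
  have hrf : ∀ l : L, r (fm l) = l := by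
    intro l
    have hpl : p (fm l) = fm l := by
      rw [hp, hfg, map_zero, sub_zero]
    have key : (⟨p (fm l), hmem _⟩ : LinearMap.range fm)
        = (LinearEquiv.ofInjective fm hinj) l :=
      Subtype.ext (by
        show p (fm l) = _
        rw [hpl, LinearEquiv.ofInjective_apply])
    show (LinearEquiv.ofInjective fm hinj).symm ⟨p (fm l), hmem _⟩ = l
    rw [key, LinearEquiv.symm_apply_apply]
  refine ⟨r ∘ₗ (U.mkQ ∘ₗ LinearMap.inr R L M), ?_⟩
  intro z hz
  have heq : (Submodule.Quotient.mk ((0, z) : L × M) : (L × M) ⧸ U)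
      = Submodule.Quotient.mk ((v ⟨z, hz⟩, 0) : L × M) := by
    rw [Submodule.Quotient.eq]
    refine ⟨-⟨z, hz⟩, ?_⟩
    simp [hφ, Prod.ext_iff]
  show r (Submodule.Quotient.mk ((0, z) : L × M)) = v ⟨z, hz⟩
  rw [heq, ← hfm, hrf]


/-- The inductive step: a compatible partial splitting in degree `n+1` extends to
degree `n`. -/
lemma step_section
    {Y E Fc : ChainComplex (ModuleCat.{u} R) ℤ}
    (f : Y ⟶ E) (g : E ⟶ Fc) (w : f ≫ g = 0)
    (hSE : (ShortComplex.mk f g w).ShortExact)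
    (hF : FTotallyAcyclic Fc)
    (hcomp : ∀ n, IsGorensteinCotorsion (Y.X n))
    (n : ℤ) (t : Fc.X (n+1) ⟶ E.X (n+1)) (ht : t ≫ g.f (n+1) = 𝟙 _)
    (ht2 : ∃ t₂ : Fc.X (n+1+1) ⟶ E.X (n+1+1),
      Fc.d (n+1+1) (n+1) ≫ t = t₂ ≫ E.d (n+1+1) (n+1)) :
    ∃ s : Fc.X n ⟶ E.X n, s ≫ g.f n = 𝟙 _ ∧ Fc.d (n+1) n ≫ s = t ≫ E.d (n+1) n := by
  classical
  have wdeg : ∀ m : ℤ, f.f m ≫ g.f m = 0 := fun m => by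
    rw [← HomologicalComplex.comp_f, w, HomologicalComplex.zero_f]
  have hdeg : ∀ m : ℤ, (ShortComplex.mk (f.f m) (g.f m) (wdeg m)).ShortExact :=
    fun m => hSE.map_of_exact (HomologicalComplex.eval _ _ m)
  have injf : ∀ m : ℤ, Function.Injective (f.f m) :=
    fun m => (ModuleCat.mono_iff_injective _).mp (hdeg m).mono_f
  have exdeg : ∀ m : ℤ, ∀ x : E.X m, g.f m x = 0 → ∃ y : Y.X m, f.f m y = x :=
    fun m => (ShortComplex.moduleCat_exact_iff _).mp (hdeg m).exact
  have hgf0 : ∀ (m : ℤ) (y' : Y.X m), g.f m (f.f m y') = 0 :=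
    fun m y' => LinearMap.congr_fun (congrArg ModuleCat.Hom.hom (wdeg m)) y'
  -- a degreewise section in degree `n`
  obtain ⟨t0, ht0⟩ := hcomp n (Fc.X n) (gf_of_flat _ (hF.1 n)) (E.X n) (f.f n) (g.f n)
    (wdeg n) (hdeg n)
  have ht0' : ∀ x : Fc.X n, g.f n (t0 x) = x := fun x => LinearMap.congr_fun (congrArg ModuleCat.Hom.hom ht0) x
  have ht' : ∀ x : Fc.X (n+1), g.f (n+1) (t x) = x := fun x => LinearMap.congr_fun (congrArg ModuleCat.Hom.hom ht) x
  -- the error term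
  let em : Fc.X (n+1) →ₗ[R] E.X n :=
    (((E.d (n+1) n).hom : E.X (n+1) →ₗ[R] E.X n) ∘ₗ ((t).hom : Fc.X (n+1) →ₗ[R] E.X (n+1)))
      - (((t0).hom : Fc.X n →ₗ[R] E.X n) ∘ₗ ((Fc.d (n+1) n).hom : Fc.X (n+1) →ₗ[R] Fc.X n))
  have hem : ∀ x, em x = E.d (n+1) n (t x) - t0 (Fc.d (n+1) n x) := fun _ => rfl
  have hge : ∀ x, g.f n (em x) = 0 := by
    intro x
    rw [hem, map_sub]
    have h1 : Fc.d (n+1) n (g.f (n+1) (t x)) = g.f n (E.d (n+1) n (t x)) :=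
      LinearMap.congr_fun (congrArg ModuleCat.Hom.hom (g.comm (n+1) n)) (t x)
    rw [← h1, ht', ht0', sub_self]
  -- the error term factors through `Y.X n`
  let u : Fc.X (n+1) →ₗ[R] Y.X n :=
    (((LinearEquiv.ofInjective ((f.f n).hom : Y.X n →ₗ[R] E.X n) (injf n)).symm)
       : LinearMap.range ((f.f n).hom : Y.X n →ₗ[R] E.X n) →ₗ[R] Y.X n) ∘ₗ
      LinearMap.codRestrict _ em (fun x => LinearMap.mem_range.mpr (exdeg n (em x) (hge x)))
  have hfu : ∀ x, f.f n (u x) = em x := by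
    intro x
    have h1 : (LinearEquiv.ofInjective ((f.f n).hom : Y.X n →ₗ[R] E.X n) (injf n)) (u x)
        = ⟨em x, LinearMap.mem_range.mpr (exdeg n (em x) (hge x))⟩ :=
      LinearEquiv.apply_symm_apply _ _
    have h2 := congrArg Subtype.val h1
    rw [LinearEquiv.ofInjective_apply] at h2
    exact h2
  -- `u` kills boundaries (= cycles)
  have hu0 : ∀ x : Fc.X (n+1), Fc.d (n+1) n x = 0 → u x = 0 := by
    intro x hx
    obtain ⟨t₂, ht₂⟩ := ht2
    obtain ⟨y, hy⟩ := (exactAt_iff_elem Fc (n+1+1) (n+1) n rfl rfl).mp (hF.2.1 (n+1)) x hx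
    have hem0 : em x = 0 := by
      have e1 : t x = E.d (n+1+1) (n+1) (t₂ y) := by
        rw [← hy]; exact LinearMap.congr_fun (congrArg ModuleCat.Hom.hom ht₂) y
      have e2 : E.d (n+1) n (E.d (n+1+1) (n+1) (t₂ y)) = 0 :=
        LinearMap.congr_fun (congrArg ModuleCat.Hom.hom (E.d_comp_d (n+1+1) (n+1) n)) (t₂ y)
      rw [hem, e1, e2, hx, map_zero, sub_zero]
    apply injf n
    rw [hfu, hem0, map_zero]
  -- descend `u` to the cycle submodule in degree `n`
  set Zn : Submodule R (Fc.X n) :=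
    LinearMap.ker ((Fc.d n (n-1)).hom : Fc.X n →ₗ[R] Fc.X (n-1)) with hZn
  have hZle : LinearMap.ker ((Fc.d (n+1) n).hom : Fc.X (n+1) →ₗ[R] Fc.X n) ≤ LinearMap.ker u :=
    fun x hx => hu0 x hx
  have eqZ : LinearMap.range ((Fc.d (n+1) n).hom : Fc.X (n+1) →ₗ[R] Fc.X n) = Zn := by
    apply le_antisymm
    · rintro _ ⟨x, rfl⟩
      exact LinearMap.congr_fun (congrArg ModuleCat.Hom.hom (Fc.d_comp_d (n+1) n (n-1))) x
    · intro z hz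
      exact (exactAt_iff_elem Fc (n+1) n (n-1) rfl (by omega)).mp (hF.2.1 n) z hz
  let v : Zn →ₗ[R] Y.X n :=
    (Submodule.liftQ _ u hZle) ∘ₗ
      (((LinearMap.quotKerEquivRange ((Fc.d (n+1) n).hom : Fc.X (n+1) →ₗ[R] Fc.X n)).symm)
        : LinearMap.range ((Fc.d (n+1) n).hom : Fc.X (n+1) →ₗ[R] Fc.X n) →ₗ[R] _) ∘ₗ
      ((LinearEquiv.ofEq _ _ eqZ.symm) : Zn →ₗ[R] _)
  have hv : ∀ (x : Fc.X (n+1)) (hm : Fc.d (n+1) n x ∈ Zn),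
      v ⟨Fc.d (n+1) n x, hm⟩ = u x := by
    intro x hm
    show (Submodule.liftQ _ u hZle)
      ((LinearMap.quotKerEquivRange ((Fc.d (n+1) n).hom : Fc.X (n+1) →ₗ[R] Fc.X n)).symm
        ((LinearEquiv.ofEq _ _ eqZ.symm) ⟨Fc.d (n+1) n x, hm⟩)) = u x
    have h1 : (LinearEquiv.ofEq _ _ eqZ.symm) (⟨Fc.d (n+1) n x, hm⟩ : Zn)
        = ⟨(Fc.d (n+1) n).hom x, LinearMap.mem_range_self _ x⟩ := rfl
    rw [h1, LinearMap.quotKerEquivRange_symm_apply_image]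
    rfl
  -- the quotient by cycles is Gorenstein flat
  have GFQ : IsGorensteinFlat (ModuleCat.of R ((Fc.X n) ⧸ Zn)) := by
    have eqZ' : LinearMap.range ((Fc.d n (n-1)).hom : Fc.X n →ₗ[R] Fc.X (n-1))
        = LinearMap.ker ((Fc.d (n-1) (n-1-1)).hom : Fc.X (n-1) →ₗ[R] Fc.X (n-1-1)) := by
      apply le_antisymm
      · rintro _ ⟨x, rfl⟩
        exact LinearMap.congr_fun (congrArg ModuleCat.Hom.hom (Fc.d_comp_d n (n-1) (n-1-1))) x
      · intro z hz
        exact (exactAt_iff_elem Fc n (n-1) (n-1-1) (by omega) (by omega)).mp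
          (hF.2.1 (n-1)) z hz
    exact isGorensteinFlat_of_iso
      (LinearEquiv.toModuleIso
        ((LinearMap.quotKerEquivRange ((Fc.d n (n-1)).hom : Fc.X n →ₗ[R] Fc.X (n-1))).trans
          (LinearEquiv.ofEq _ _ eqZ')))
      (gf_ker hF (n-1) (n-1-1) (by omega))
  -- extend `v` to all of `Fc.X n`
  obtain ⟨wm, hwm⟩ := extend_of_ext1 (Y.X n) (Fc.X n) Zn
    (hcomp n (ModuleCat.of R ((Fc.X n) ⧸ Zn)) GFQ) v
  -- the corrected section
  let snl : Fc.X n →ₗ[R] E.X n :=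
    ((t0).hom : Fc.X n →ₗ[R] E.X n) + (((f.f n).hom : Y.X n →ₗ[R] E.X n) ∘ₗ wm)
  let sn : Fc.X n ⟶ E.X n := ModuleCat.ofHom snl
  refine ⟨sn, ?_, ?_⟩
  · ext x
    show g.f n (t0 x + f.f n (wm x)) = x
    rw [map_add, ht0', hgf0 n (wm x), add_zero]
  · ext x
    have hmZ : Fc.d (n+1) n x ∈ Zn :=
      LinearMap.congr_fun (congrArg ModuleCat.Hom.hom (Fc.d_comp_d (n+1) n (n-1))) x
    show t0 (Fc.d (n+1) n x) + f.f n (wm (Fc.d (n+1) n x)) = E.d (n+1) n (t x)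
    rw [hwm _ hmZ, hv x hmZ, hfu, hem]
    abel

end GCAux

theorem ext1_vanishes_of_bddAbove_gorensteinCotorsion_components
    [IsNoetherianRing R]
    (Y : ChainComplex (ModuleCat.{u} R) ℤ)
    (hbdd : ∃ N : ℤ, ∀ n > N, IsZero (Y.X n))
    (hcomp : ∀ n, IsGorensteinCotorsion (Y.X n))
    (F : ChainComplex (ModuleCat.{u} R) ℤ) (hF : FTotallyAcyclic F) :
    Ext1Vanishes F Y := by
  classical
  obtain ⟨N, hN⟩ := hbdd
  intro E f g w hSE
  have wdeg : ∀ m : ℤ, f.f m ≫ g.f m = 0 := fun m => by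
    rw [← HomologicalComplex.comp_f, w, HomologicalComplex.zero_f]
  have hdeg : ∀ m : ℤ, (ShortComplex.mk (f.f m) (g.f m) (wdeg m)).ShortExact :=
    fun m => hSE.map_of_exact (HomologicalComplex.eval _ _ m)
  have exdeg : ∀ m : ℤ, ∀ x : E.X m, g.f m x = 0 → ∃ y : Y.X m, f.f m y = x :=
    fun m => (ShortComplex.moduleCat_exact_iff _).mp (hdeg m).exact
  have hsec : ∀ m : ℤ, ∃ t : F.X m ⟶ E.X m, t ≫ g.f m = 𝟙 _ :=
    fun m => hcomp m (F.X m) (GCAux.gf_of_flat _ (hF.1 m)) (E.X m) (f.f m) (g.f m)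
      (wdeg m) (hdeg m)
  have hmono : ∀ m : ℤ, N < m → Function.Injective (g.f m) := by
    intro m hm
    have hf0 : f.f m = 0 := (hN m hm).eq_of_src _ _
    have key : ∀ x : E.X m, g.f m x = 0 → x = 0 := by
      intro x hx
      obtain ⟨y, hy⟩ := exdeg m x hx
      rw [← hy, hf0]
      rfl
    intro a b hab
    have := key (a - b) (by rw [map_sub, hab, sub_self])
    exact sub_eq_zero.mp this
  -- the invariant for the downward recursion
  let Inv : ℕ → (∀ m : ℤ, (F.X m ⟶ E.X m)) → Prop := fun k s =>
    (∀ m, s m ≫ g.f m = 𝟙 _) ∧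
      (∀ m : ℤ, N + 1 - (k : ℤ) ≤ m → F.d (m+1) m ≫ s m = s (m+1) ≫ E.d (m+1) m)
  have base : {s : ∀ m : ℤ, (F.X m ⟶ E.X m) // Inv 0 s} := by
    refine ⟨fun m => Classical.choose (hsec m),
      fun m => Classical.choose_spec (hsec m), ?_⟩
    intro m hm
    ext x
    apply hmono m (by omega)
    have h1 : g.f m ((Classical.choose (hsec m)) (F.d (m+1) m x)) = F.d (m+1) m x :=
      LinearMap.congr_fun (congrArg ModuleCat.Hom.hom (Classical.choose_spec (hsec m))) _
    have h2 : F.d (m+1) m (g.f (m+1) ((Classical.choose (hsec (m+1))) x))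
        = g.f m (E.d (m+1) m ((Classical.choose (hsec (m+1))) x)) :=
      LinearMap.congr_fun (congrArg ModuleCat.Hom.hom (g.comm (m+1) m)) _
    have h3 : g.f (m+1) ((Classical.choose (hsec (m+1))) x) = x :=
      LinearMap.congr_fun (congrArg ModuleCat.Hom.hom (Classical.choose_spec (hsec (m+1)))) _
    show g.f m ((Classical.choose (hsec m)) (F.d (m+1) m x))
        = g.f m (E.d (m+1) m ((Classical.choose (hsec (m+1))) x))
    rw [h1, ← h2, h3]
  have stepf : ∀ (k : ℕ) (p : {s : ∀ m : ℤ, (F.X m ⟶ E.X m) // Inv k s}),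
      {s' : ∀ m : ℤ, (F.X m ⟶ E.X m) //
        Inv (k+1) s' ∧ ∀ m : ℤ, m ≠ N - (k:ℤ) → s' m = p.1 m} := by
    intro k p
    have hstep := GCAux.step_section f g w hSE hF hcomp (N - (k:ℤ))
      (p.1 (N - (k:ℤ) + 1)) (p.2.1 _)
      ⟨p.1 (N - (k:ℤ) + 1 + 1), p.2.2 (N - (k:ℤ) + 1) (by omega)⟩
    set σ := Classical.choose hstep with hσdef
    have hσ1 := (Classical.choose_spec hstep).1
    have hσ2 := (Classical.choose_spec hstep).2
    have key1 : ∀ (m : ℤ) (h : m = N - (k:ℤ)),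
        (eqToHom (congrArg F.X h) ≫ σ ≫ eqToHom (congrArg E.X h.symm)) ≫ g.f m
          = 𝟙 (F.X m) := by
      rintro m rfl
      simpa using hσ1
    have key2 : ∀ (m : ℤ) (h : m = N - (k:ℤ)),
        F.d (m+1) m ≫ (eqToHom (congrArg F.X h) ≫ σ ≫ eqToHom (congrArg E.X h.symm))
          = p.1 (m+1) ≫ E.d (m+1) m := by
      rintro m rfl
      simpa using hσ2
    refine ⟨fun m => if h : m = N - (k:ℤ)
        then eqToHom (congrArg F.X h) ≫ σ ≫ eqToHom (congrArg E.X h.symm)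
        else p.1 m, ⟨?_, ?_⟩, ?_⟩
    · intro m
      dsimp only
      by_cases h : m = N - (k:ℤ)
      · rw [dif_pos h]
        exact key1 m h
      · rw [dif_neg h]
        exact p.2.1 m
    · intro m hm
      dsimp only
      have hm' : N - (k:ℤ) ≤ m := by push_cast at hm; omega
      by_cases h : m = N - (k:ℤ)
      · rw [dif_pos h, dif_neg (by omega : ¬ (m + 1 = N - (k:ℤ)))]
        exact key2 m h
      · rw [dif_neg h, dif_neg (by omega : ¬ (m + 1 = N - (k:ℤ)))]
        exact p.2.2 m (by omega)
    · intro m hm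
      dsimp only
      exact dif_neg hm
  let τ : (k : ℕ) → {s : ∀ m : ℤ, (F.X m ⟶ E.X m) // Inv k s} := fun k =>
    Nat.rec base (fun k ih => ⟨(stepf k ih).1, (stepf k ih).2.1⟩) k
  have hτs : ∀ k : ℕ, (τ (k+1)).1 = (stepf k (τ k)).1 := fun k => rfl
  have stab : ∀ (k : ℕ) (m : ℤ), (N + 1 - m).toNat ≤ k →
      (τ k).1 m = (τ (N + 1 - m).toNat).1 m := by
    intro k
    induction k with
    | zero =>
      intro m h
      have h0 : (N + 1 - m).toNat = 0 := Nat.le_antisymm h (Nat.zero_le _)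
      rw [h0]
    | succ k ih =>
      intro m h
      by_cases hk : (N + 1 - m).toNat ≤ k
      · have hne : m ≠ N - (k:ℤ) := by
          have h1 : N + 1 - m ≤ ((N + 1 - m).toNat : ℤ) := Int.self_le_toNat _
          omega
        rw [hτs k]
        rw [(stepf k (τ k)).2.2 m hne]
        exact ih m hk
      · have : (N + 1 - m).toNat = k + 1 :=
          Nat.le_antisymm h (by omega)
        rw [this]
  refine ⟨{ f := fun m => (τ (N + 1 - m).toNat).1 m, comm' := ?_ }, ?_⟩
  · intro i j hij
    rw [ComplexShape.down_Rel] at hij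
    subst hij
    have h2 : (τ ((N + 1 - j).toNat)).1 (j+1) = (τ (N + 1 - (j+1)).toNat).1 (j+1) :=
      stab ((N + 1 - j).toNat) (j+1) (Int.toNat_le_toNat (by omega))
    rw [← h2]
    exact ((τ ((N + 1 - j).toNat)).2.2 j
      (by have h1 : N + 1 - j ≤ ((N + 1 - j).toNat : ℤ) := Int.self_le_toNat _; omega)).symm
  · apply HomologicalComplex.hom_ext
    intro m
    rw [HomologicalComplex.comp_f, HomologicalComplex.id_f]
    exact (τ (N + 1 - m).toNat).2.1 m
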